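/- Suppose a nonnegative-integer-valued random variable T satisfies, for every γ ∈ (0,1], E[T] ≤ 2α·(log(1/w(γ)) + 2·log(1/γ)) + 22 with α = 1/log(4/3), where w is the width function of a unimodal density r on [0,1] with sup r = r_max ≥ 1. Then E[T] ≤ 4α·log(r_max) + 4α·log 2 + 22. -/

import Mathlib

open MeasureTheory Set

/-- `r` is unimodal on `[a,b]` with mode `xm`. -/
def UnimodalOn (r : ℝ → ℝ) (a b xm : ℝ) : Prop :=
  xm ∈ Set.Icc a b ∧
  (∀ x ∈ Set.Icc a b, ∀ y ∈ Set.Icc a b, x ≤ y → y ≤ xm → r x ≤ r y) ∧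
  (∀ x ∈ Set.Icc a b, ∀ y ∈ Set.Icc a b, xm ≤ x → x ≤ y → r y ≤ r x)

/-- Superlevel set `S(γ) = {x ∈ [0,1] : r x ≥ γ · r_max}`. -/
def superlevel (r : ℝ → ℝ) (rmax γ : ℝ) : Set ℝ :=
  {x ∈ Set.Icc (0:ℝ) 1 | γ * rmax ≤ r x}

/-- Width function `w(γ) = inf {δ ∈ [0,1] : ∃ z ∈ [0,1], S(γ) ⊆ [z, z+δ]}`. -/
noncomputable def widthFun (r : ℝ → ℝ) (rmax γ : ℝ) : ℝ :=
  sInf {δ ∈ Set.Icc (0:ℝ) 1 | ∃ z ∈ Set.Icc (0:ℝ) 1,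
    superlevel r rmax γ ⊆ Set.Icc z (z + δ)}

lemma superlevel_subset (r : ℝ → ℝ) (rmax γ : ℝ) : superlevel r rmax γ ⊆ Set.Icc 0 1 :=
  fun _ hx => hx.1

lemma one_mem_D (r : ℝ → ℝ) (rmax γ : ℝ) :
    (1:ℝ) ∈ {δ ∈ Set.Icc (0:ℝ) 1 | ∃ z ∈ Set.Icc (0:ℝ) 1,
      superlevel r rmax γ ⊆ Set.Icc z (z + δ)} :=
  ⟨⟨zero_le_one, le_refl 1⟩, 0, ⟨le_refl 0, zero_le_one⟩, by
    simpa using superlevel_subset r rmax γ⟩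

lemma vol_le_width (r : ℝ → ℝ) (rmax γ : ℝ) :
    volume (superlevel r rmax γ) ≤ ENNReal.ofReal (widthFun r rmax γ) := by
  set D := {δ ∈ Set.Icc (0:ℝ) 1 | ∃ z ∈ Set.Icc (0:ℝ) 1,
      superlevel r rmax γ ⊆ Set.Icc z (z + δ)} with hD
  have hfin : volume (superlevel r rmax γ) ≤ 1 := by
    calc volume (superlevel r rmax γ) ≤ volume (Set.Icc (0:ℝ) 1) :=
          measure_mono (superlevel_subset r rmax γ)
      _ = 1 := by simp
  have hne : volume (superlevel r rmax γ) ≠ ⊤ := (hfin.trans_lt (by simp)).ne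
  have hkey : (volume (superlevel r rmax γ)).toReal ≤ sInf D := by
    apply le_csInf ⟨1, one_mem_D r rmax γ⟩
    rintro δ ⟨⟨hδ0, _⟩, z, _, hsubδ⟩
    refine ENNReal.toReal_le_of_le_ofReal hδ0 ?_
    calc volume (superlevel r rmax γ) ≤ volume (Set.Icc z (z+δ)) := measure_mono hsubδ
      _ = ENNReal.ofReal δ := by rw [Real.volume_Icc]; ring_nf
  calc volume (superlevel r rmax γ)
      = ENNReal.ofReal (volume (superlevel r rmax γ)).toReal := (ENNReal.ofReal_toReal hne).symm
    _ ≤ ENNReal.ofReal (sInf D) := ENNReal.ofReal_le_ofReal hkey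
    _ = ENNReal.ofReal (widthFun r rmax γ) := rfl

lemma width_le_one (r : ℝ → ℝ) (rmax γ : ℝ) : widthFun r rmax γ ≤ 1 :=
  csInf_le ⟨0, fun δ hδ => hδ.1.1⟩ (one_mem_D r rmax γ)

lemma exists_good (r : ℝ → ℝ) (rmax : ℝ) (hrmax : 1 ≤ rmax)
    (hmeas : Measurable r) (hnonneg : ∀ x ∈ Set.Icc (0:ℝ) 1, 0 ≤ r x)
    (hint : ∫ x in Set.Icc (0:ℝ) 1, r x = 1)
    (hub : ∀ x ∈ Set.Icc (0:ℝ) 1, r x ≤ rmax) :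
    ∃ γ ∈ Set.Ioc (0:ℝ) 1, 1/(4*rmax^2*γ^2) ≤ widthFun r rmax γ := by
  have hrpos : (0:ℝ) < rmax := lt_of_lt_of_le one_pos hrmax
  by_contra hcon
  push_neg at hcon
  set ν := volume.restrict (Set.Icc (0:ℝ) 1) with hν
  have hnn : 0 ≤ᵐ[ν] r := by
    filter_upwards [ae_restrict_mem measurableSet_Icc] with x hx using hnonneg x hx
  have hintg : Integrable r ν := by
    refine Integrable.mono' (integrable_const rmax) hmeas.aestronglyMeasurable ?_
    filter_upwards [ae_restrict_mem measurableSet_Icc] with x hx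
    rw [Real.norm_eq_abs, abs_of_nonneg (hnonneg x hx)]
    exact hub x hx
  have h1 : ∫⁻ x, ENNReal.ofReal (r x) ∂ν = 1 := by
    rw [← ofReal_integral_eq_lintegral_ofReal hintg hnn, hint]
    simp
  have h2 : ∫⁻ t in Set.Ioi (0:ℝ), ν {a | t ≤ r a} = 1 := by
    rw [← lintegral_eq_lintegral_meas_le ν hnn hmeas.aemeasurable]
    exact h1
  set g : ℝ → ℝ := fun t => if t ≤ rmax then min 1 (1/(4*t^2)) else 0 with hg
  have h3 : ∀ t ∈ Set.Ioi (0:ℝ), ν {a | t ≤ r a} ≤ ENNReal.ofReal (g t) := by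
    intro t ht
    have htpos : (0:ℝ) < t := ht
    have hset : ν {a | t ≤ r a} = volume ({a | t ≤ r a} ∩ Set.Icc 0 1) :=
      Measure.restrict_apply (measurableSet_le measurable_const hmeas)
    by_cases hcase : t ≤ rmax
    · have hγ : t / rmax ∈ Set.Ioc (0:ℝ) 1 := ⟨div_pos htpos hrpos, (div_le_one hrpos).2 hcase⟩
      have hsl : {a | t ≤ r a} ∩ Set.Icc 0 1 = superlevel r rmax (t/rmax) := by
        ext x
        simp only [superlevel, Set.mem_inter_iff, Set.mem_setOf_eq, Set.mem_sep_iff]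
        rw [div_mul_cancel₀ t hrpos.ne']
        tauto
      have hw := hcon _ hγ
      have ht2 : 4 * rmax^2 * (t/rmax)^2 = 4*t^2 := by field_simp
      rw [hset, hsl, hg]
      simp only [if_pos hcase]
      calc volume (superlevel r rmax (t/rmax)) ≤ ENNReal.ofReal (widthFun r rmax (t/rmax)) :=
            vol_le_width _ _ _
        _ ≤ ENNReal.ofReal (min 1 (1/(4*t^2))) := by
            apply ENNReal.ofReal_le_ofReal
            refine le_min (width_le_one _ _ _) ?_
            rw [← ht2]
            exact hw.le
    · have hempty : {a | t ≤ r a} ∩ Set.Icc 0 1 = ∅ := by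
        ext x
        simp only [Set.mem_inter_iff, Set.mem_setOf_eq, Set.mem_empty_iff_false, iff_false,
          not_and]
        intro h1x h2x
        exact hcase (h1x.trans (hub x h2x))
      rw [hset, hempty]
      simp
  have h4 : (1 : ENNReal) ≤ ∫⁻ t in Set.Ioi (0:ℝ), ENNReal.ofReal (g t) := by
    rw [← h2]
    exact setLIntegral_mono' measurableSet_Ioi h3
  -- now compute the integral of g
  set F : ℝ → ℝ := fun t => min 1 (1/(4*t^2)) with hF
  have hFmeas : Measurable F := by
    apply Measurable.min measurable_const
    apply Measurable.div measurable_const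
    fun_prop
  have hFnonneg : ∀ t, 0 ≤ F t := by
    intro t
    refine le_min zero_le_one (by positivity)
  have hsplit : ∫⁻ t in Set.Ioi (0:ℝ), ENNReal.ofReal (g t)
      = (∫⁻ t in Set.Ioc (0:ℝ) rmax, ENNReal.ofReal (g t))
        + ∫⁻ t in Set.Ioi rmax, ENNReal.ofReal (g t) := by
    have hu : Set.Ioc (0:ℝ) rmax ∪ Set.Ioi rmax = Set.Ioi (0:ℝ) :=
      Set.Ioc_union_Ioi_eq_Ioi hrpos.le
    rw [← hu]
    exact lintegral_union measurableSet_Ioi (Set.Ioc_disjoint_Ioi_same (a := (0:ℝ)) (b := rmax))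
  have hright : ∫⁻ t in Set.Ioi rmax, ENNReal.ofReal (g t) = 0 := by
    have e1 : ∫⁻ t in Set.Ioi rmax, ENNReal.ofReal (g t)
        = ∫⁻ _ in Set.Ioi rmax, (0 : ENNReal) := by
      refine setLIntegral_congr_fun measurableSet_Ioi ?_
      intro t ht
      rw [Set.mem_Ioi] at ht
      simp only [hg, if_neg (not_le.2 ht), ENNReal.ofReal_zero]
    rw [e1]
    simp
  have hFintIoc : ∀ a b : ℝ, IntegrableOn F (Set.Ioc a b) := by
    intro a b
    refine Integrable.mono' (integrableOn_const (C := (1:ℝ)) measure_Ioc_lt_top.ne)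
      hFmeas.aestronglyMeasurable ?_
    filter_upwards with t
    rw [Real.norm_eq_abs, abs_of_nonneg (hFnonneg t)]
    exact min_le_left _ _
  have hleft : ∫⁻ t in Set.Ioc (0:ℝ) rmax, ENNReal.ofReal (g t)
      = ENNReal.ofReal (∫ t in Set.Ioc (0:ℝ) rmax, F t) := by
    have e1 : ∫⁻ t in Set.Ioc (0:ℝ) rmax, ENNReal.ofReal (g t)
        = ∫⁻ t in Set.Ioc (0:ℝ) rmax, ENNReal.ofReal (F t) := by
      refine setLIntegral_congr_fun measurableSet_Ioc ?_
      intro t ht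
      simp only [hg, if_pos ht.2, hF]
    rw [e1, ← ofReal_integral_eq_lintegral_ofReal (hFintIoc 0 rmax) (ae_of_all _ hFnonneg)]
  have hIoc : Set.Ioc (0:ℝ) rmax = Set.Ioc (0:ℝ) (1/2) ∪ Set.Ioc (1/2) rmax :=
    (Set.Ioc_union_Ioc_eq_Ioc (by norm_num) (by linarith)).symm
  have hI1 : ∫ t in Set.Ioc (0:ℝ) (1/2), F t = 1/2 := by
    rw [setIntegral_congr_fun measurableSet_Ioc
      (fun t ht => show F t = 1 by
        rw [hF]
        refine min_eq_left ?_
        rw [le_one_div (by norm_num) (by nlinarith [ht.1])]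
        nlinarith [ht.1, ht.2])]
    simp [Real.volume_Ioc]
  have hI2 : ∫ t in Set.Ioc (1/2 : ℝ) rmax, F t = 1/2 - 1/(4*rmax) := by
    rw [setIntegral_congr_fun measurableSet_Ioc
      (fun t ht => show F t = 1/(4*t^2) by
        rw [hF]
        refine min_eq_right ?_
        rw [one_div_le (by nlinarith [ht.1]) (by norm_num)]
        nlinarith [ht.1])]
    rw [← intervalIntegral.integral_of_le (by linarith : (1/2:ℝ) ≤ rmax)]
    have hderiv : ∀ t ∈ Set.uIcc (1/2 : ℝ) rmax,
        HasDerivAt (fun u => -(1/(4*u))) (1/(4*t^2)) t := by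
      intro t ht
      rw [Set.uIcc_of_le (by linarith : (1/2:ℝ) ≤ rmax)] at ht
      have htpos : (0:ℝ) < t := lt_of_lt_of_le (by norm_num) ht.1
      have h1 : HasDerivAt (fun u : ℝ => 4*u) 4 t := by
        simpa using (hasDerivAt_id t).const_mul 4
      have h2 := (h1.inv (by positivity)).neg
      have ht0 : t ≠ 0 := ne_of_gt htpos
      have e : (fun u : ℝ => -(1/(4*u))) = -(fun u : ℝ => 4*u)⁻¹ := by ext u; simp [one_div]
      rw [e]
      refine h2.congr_deriv ?_
      field_simp
    have hcont : IntervalIntegrable (fun t => 1/(4*t^2)) volume (1/2 : ℝ) rmax := by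
      apply ContinuousOn.intervalIntegrable
      apply ContinuousOn.div continuousOn_const (by fun_prop)
      intro t ht
      rw [Set.uIcc_of_le (by linarith : (1/2:ℝ) ≤ rmax)] at ht
      have htpos : (0:ℝ) < t := lt_of_lt_of_le (by norm_num) ht.1
      positivity
    rw [intervalIntegral.integral_eq_sub_of_hasDerivAt hderiv hcont]
    have h0 : rmax ≠ 0 := ne_of_gt hrpos
    field_simp
    ring
  have htotal : ∫ t in Set.Ioc (0:ℝ) rmax, F t = 1 - 1/(4*rmax) := by
    rw [hIoc, setIntegral_union (Set.Ioc_disjoint_Ioc_of_le le_rfl) measurableSet_Ioc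
      (hFintIoc 0 (1/2)) (hFintIoc (1/2) rmax), hI1, hI2]
    ring
  rw [hsplit, hright, hleft, htotal] at h4
  simp only [add_zero] at h4
  rw [ENNReal.one_le_ofReal] at h4
  have : 0 < 1/(4*rmax) := by positivity
  linarith

/-- Suppose a nonnegative-integer-valued random variable `T` satisfies, for every
`γ ∈ (0,1]`, `E[T] ≤ 2α(log(1/w(γ)) + 2 log(1/γ)) + 22` with `α = 1/log(4/3)`, where
`w` is the width function of a unimodal probability density `r` on `[0,1]` with
`sup r = r_max ≥ 1`.  Then `E[T] ≤ 4α log r_max + 4α log 2 + 22`. -/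
theorem stmt19 {Ω : Type*} [MeasurableSpace Ω] (μ : Measure Ω) [IsProbabilityMeasure μ]
    (T : Ω → ℕ) (hTmeas : Measurable T)
    (r : ℝ → ℝ) (rmax xm : ℝ) (hrmax : 1 ≤ rmax)
    (hmeas : Measurable r) (hnonneg : ∀ x ∈ Set.Icc (0:ℝ) 1, 0 ≤ r x)
    (huni : UnimodalOn r 0 1 xm)
    (hint : ∫ x in Set.Icc (0:ℝ) 1, r x = 1)
    (hsup : IsLUB (r '' Set.Icc (0:ℝ) 1) rmax)
    (α : ℝ) (hα : α = 1 / Real.log (4/3))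
    (hbound : ∀ γ ∈ Set.Ioc (0:ℝ) 1,
      ∫ ω, (T ω : ℝ) ∂μ ≤
        2 * α * (Real.log (1 / widthFun r rmax γ) + 2 * Real.log (1/γ)) + 22) :
    ∫ ω, (T ω : ℝ) ∂μ ≤ 4 * α * Real.log rmax + 4 * α * Real.log 2 + 22 := by
  have hlog43 : 0 < Real.log (4/3) := Real.log_pos (by norm_num)
  have hαpos : 0 < α := by rw [hα]; positivity
  have hrpos : (0:ℝ) < rmax := lt_of_lt_of_le one_pos hrmax
  have hub : ∀ x ∈ Set.Icc (0:ℝ) 1, r x ≤ rmax := fun x hx => hsup.1 ⟨x, hx, rfl⟩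
  obtain ⟨γ, hγ, hwγ⟩ := exists_good r rmax hrmax hmeas hnonneg hint hub
  have hγ0 : 0 < γ := hγ.1
  have hwpos : 0 < widthFun r rmax γ := lt_of_lt_of_le (by positivity) hwγ
  have h1 : 1 / widthFun r rmax γ ≤ 4 * rmax^2 * γ^2 := by
    have h := one_div_le_one_div_of_le (by positivity) hwγ
    rwa [one_div_one_div] at h
  have h2 : Real.log (1 / widthFun r rmax γ) ≤ Real.log (4*rmax^2*γ^2) :=
    Real.log_le_log (by positivity) h1
  have h3 : Real.log (4*rmax^2*γ^2)
      = Real.log 4 + 2 * Real.log rmax + 2 * Real.log γ := by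
    rw [Real.log_mul (by positivity) (by positivity),
      Real.log_mul (by positivity) (by positivity), Real.log_pow, Real.log_pow]
    push_cast
    ring
  have hlog4 : Real.log 4 = 2 * Real.log 2 := by
    rw [show (4:ℝ) = 2^2 by norm_num, Real.log_pow]
    push_cast
    ring
  have h4 : Real.log (1/γ) = -Real.log γ := by rw [one_div, Real.log_inv]
  have hkey : Real.log (1 / widthFun r rmax γ) + 2 * Real.log (1/γ)
      ≤ 2 * Real.log rmax + 2 * Real.log 2 := by
    rw [h4]
    linarith
  calc ∫ ω, (T ω : ℝ) ∂μ
      ≤ 2 * α * (Real.log (1 / widthFun r rmax γ) + 2 * Real.log (1/γ)) + 22 := hbound γ hγ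
    _ ≤ 2 * α * (2 * Real.log rmax + 2 * Real.log 2) + 22 := by
        have := mul_le_mul_of_nonneg_left hkey (by positivity : (0:ℝ) ≤ 2*α)
        linarith
    _ = 4 * α * Real.log rmax + 4 * α * Real.log 2 + 22 := by ring
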